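/- Let p and q be distinct primes with q ≢ 1 (mod p). Then any two left braces whose additive group is cyclic of order p²q and whose kernel of λ has order pq are isomorphic as braces. -/

import Mathlib

/-- Any additive endomorphism of `ZMod n` is multiplication by its value at 1. -/
lemma zmod_hom_mul {n : ℕ} [NeZero n] (L : ZMod n →+ ZMod n) (b : ZMod n) :
    L b = L 1 * b := by
  have hb : b = (b.val : ℕ) • (1 : ZMod n) := by
    rw [nsmul_eq_mul, mul_one]
    exact (ZMod.natCast_rightInverse b).symm
  rw [hb, map_nsmul, nsmul_eq_mul, nsmul_eq_mul, mul_one, ZMod.natCast_rightInverse b]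
  ring

/-- In `ZMod (p^2*q)`, a unit `x` with `x^p = 1` satisfies `x ≡ 1 (mod pq)`. -/
lemma unit_pow_sub (p q : ℕ) (hp : p.Prime) (hq : q.Prime) (hpq : p ≠ q)
    (hmod : ¬ q ≡ 1 [MOD p]) (x : ZMod (p ^ 2 * q)) (hx : IsUnit x) (hxp : x ^ p = 1) :
    ∃ t : ℕ, x - 1 = ((p * q * t : ℕ) : ZMod (p ^ 2 * q)) := by
  haveI : Fact p.Prime := ⟨hp⟩
  haveI : Fact q.Prime := ⟨hq⟩
  haveI : NeZero (p ^ 2 * q) := ⟨Nat.mul_ne_zero (pow_ne_zero 2 hp.pos.ne') hq.pos.ne'⟩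
  have hpd : p ∣ p ^ 2 * q := ⟨p * q, by ring⟩
  have hqd : q ∣ p ^ 2 * q := ⟨p ^ 2, by ring⟩
  -- p divides (x-1).val
  have hdp : p ∣ (x - 1).val := by
    have h1 : (ZMod.castHom hpd (ZMod p)) x = 1 := by
      have h2 := congrArg (ZMod.castHom hpd (ZMod p)) hxp
      rw [map_pow, map_one] at h2
      calc (ZMod.castHom hpd (ZMod p)) x
          = (ZMod.castHom hpd (ZMod p)) x ^ p := (ZMod.pow_card _).symm
        _ = 1 := h2
    have h3 : (ZMod.castHom hpd (ZMod p)) (x - 1) = 0 := by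
      rw [map_sub, h1, map_one, sub_self]
    rw [ZMod.castHom_apply, ← ZMod.natCast_val, ZMod.natCast_eq_zero_iff] at h3
    exact h3
  -- q divides (x-1).val
  have hdq : q ∣ (x - 1).val := by
    have hxq : IsUnit ((ZMod.castHom hqd (ZMod q)) x) := hx.map _
    set w : (ZMod q)ˣ := hxq.unit with hw
    have hwp : w ^ p = 1 := by
      ext
      push_cast
      rw [hw, IsUnit.unit_spec, ← map_pow, hxp, map_one]
    have hord : orderOf w ∣ p := orderOf_dvd_of_pow_eq_one hwp
    rcases hp.eq_one_or_self_of_dvd _ hord with h1 | h1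
    · have hw1 : w = 1 := orderOf_eq_one_iff.mp h1
      have h2 : (ZMod.castHom hqd (ZMod q)) x = 1 := by
        rw [← IsUnit.unit_spec hxq, ← hw, hw1, Units.val_one]
      have h3 : (ZMod.castHom hqd (ZMod q)) (x - 1) = 0 := by
        rw [map_sub, h2, map_one, sub_self]
      rw [ZMod.castHom_apply, ← ZMod.natCast_val, ZMod.natCast_eq_zero_iff] at h3
      exact h3
    · exfalso
      apply hmod
      have hcard : Nat.card (ZMod q)ˣ = q - 1 := by
        rw [Nat.card_eq_fintype_card, ZMod.card_units_eq_totient, Nat.totient_prime hq]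
      have : p ∣ q - 1 := by
        rw [← h1, ← hcard]; exact orderOf_dvd_natCard w
      exact ((Nat.modEq_iff_dvd' hq.one_lt.le).mpr this).symm
  -- combine
  obtain ⟨t, ht⟩ := (Nat.Coprime.mul_dvd_of_dvd_of_dvd
    ((Nat.coprime_primes hp hq).mpr hpq) hdp hdq)
  refine ⟨t, ?_⟩
  rw [← ZMod.natCast_rightInverse (x - 1), ht]




/-- `f` is a left-brace multiplication on the abelian group `B`: `(B, f)` is a group
with identity `0` and `f a (b + c) = f a b - a + f a c` holds. -/
def IsLeftBrace {B : Type*} [AddCommGroup B] (f : B → B → B) : Prop :=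
  (∀ a b c, f (f a b) c = f a (f b c)) ∧
  (∀ a, f 0 a = a) ∧
  (∀ a, f a 0 = a) ∧
  (∀ a, ∃ a', f a' a = 0) ∧
  (∀ a b c, f a (b + c) = f a b - a + f a c)

/-- The kernel of `λ`: the set of `a` with `λ_a = id`, i.e. `a ∘ b = a + b` for all `b`. -/
def kerLambda {B : Type*} [AddCommGroup B] (f : B → B → B) : Set B :=
  {a | ∀ b, f a b = a + b}

lemma classify (p q : ℕ) (hp : p.Prime) (hq : q.Prime) (hpq : p ≠ q)
    (hmod : ¬ q ≡ 1 [MOD p])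
    (g : ZMod (p ^ 2 * q) → ZMod (p ^ 2 * q) → ZMod (p ^ 2 * q)) (hb : IsLeftBrace g)
    (hk : Nat.card ↥(kerLambda g) = p * q) :
    ∃ c : ℕ, ¬ p ∣ c ∧
      ∀ a b, g a b = a + b + ((p * q * c : ℕ) : ZMod (p ^ 2 * q)) * a * b := by
  haveI : Fact p.Prime := ⟨hp⟩
  haveI : Fact q.Prime := ⟨hq⟩
  haveI : NeZero (p ^ 2 * q) := ⟨Nat.mul_ne_zero (pow_ne_zero 2 hp.pos.ne') hq.pos.ne'⟩
  obtain ⟨hassoc, hidl, hidr, hinv, hdist⟩ := hb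
  set u : ZMod (p ^ 2 * q) → ZMod (p ^ 2 * q) := fun a => g a 1 - a with hu
  have hlam : ∀ a b, g a b = a + u a * b := by
    intro a b
    have hadd : ∀ x y, (g a (x + y) - a) = (g a x - a) + (g a y - a) := by
      intro x y; rw [hdist]; ring
    have h1 : AddMonoidHom.mk' (fun x => g a x - a) hadd b
        = AddMonoidHom.mk' (fun x => g a x - a) hadd 1 * b := zmod_hom_mul _ b
    have h2 : g a b - a = (g a 1 - a) * b := h1
    have h3 : u a = g a 1 - a := rfl
    rw [h3]
    linear_combination h2
  have hu0 : u 0 = 1 := by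
    have : u 0 = g 0 1 - 0 := rfl
    rw [this, hidl, sub_zero]
  have hmul : ∀ a b, u (g a b) = u a * u b := by
    intro a b
    have h := hassoc a b 1
    rw [hlam (g a b) 1, hlam a (g b 1), hlam b 1] at h
    have h2 : g a b = a + u a * b := hlam a b
    linear_combination h - h2
  have hunit : ∀ a, ∃ a', g a' a = 0 ∧ u a' * u a = 1 := by
    intro a
    obtain ⟨a', ha'⟩ := hinv a
    exact ⟨a', ha', by rw [← hmul, ha', hu0]⟩
  have hKiff : ∀ a, a ∈ kerLambda g ↔ u a = 1 := by
    intro a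
    constructor
    · intro h
      have h1 := h 1
      have h3 : u a = g a 1 - a := rfl
      rw [h3, h1]; ring
    · intro h b; rw [hlam, h, one_mul]
  set Ksub : AddSubgroup (ZMod (p ^ 2 * q)) :=
    { carrier := kerLambda g
      zero_mem' := (hKiff 0).mpr hu0
      add_mem' := by
        intro a b ha hb
        rw [hKiff] at ha hb ⊢
        have : a + b = g a b := by rw [hlam, ha, one_mul]
        rw [this, hmul, ha, hb, one_mul]
      neg_mem' := by
        intro a ha
        rw [hKiff] at ha
        obtain ⟨a', ha1, ha2⟩ := hunit a
        rw [ha, mul_one] at ha2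
        rw [hlam, ha2, one_mul] at ha1
        have : -a = a' := by linear_combination -ha1
        rw [hKiff, this, ha2] } with hK
  have hKsub_card : Nat.card Ksub = p * q := hk
  have hann : ∀ a ∈ kerLambda g, ((p * q : ℕ) : ZMod (p ^ 2 * q)) * a = 0 := by
    intro a ha
    have h1 : addOrderOf a ∣ p * q := by
      rw [← hKsub_card]
      exact AddSubgroup.addOrderOf_dvd_natCard Ksub ha
    have h3 : (p * q) • a = 0 := addOrderOf_dvd_iff_nsmul_eq_zero.mp h1
    rw [← h3, nsmul_eq_mul]
  have hmemz : ∀ a : ZMod (p ^ 2 * q), ((p * q : ℕ) : ZMod (p ^ 2 * q)) * a = 0 →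
      a ∈ AddSubgroup.zmultiples ((p : ℕ) : ZMod (p ^ 2 * q)) := by
    intro a ha
    have h1 : (((p * q) * a.val : ℕ) : ZMod (p ^ 2 * q)) = 0 := by
      rw [Nat.cast_mul, ZMod.natCast_rightInverse a, ha]
    rw [ZMod.natCast_eq_zero_iff] at h1
    have h2 : p * q * p ∣ p * q * a.val := by
      calc p * q * p = p ^ 2 * q := by ring
        _ ∣ p * q * a.val := h1
    have h3 : p ∣ a.val := (mul_dvd_mul_iff_left
      (Nat.mul_ne_zero hp.pos.ne' hq.pos.ne' : (p * q : ℕ) ≠ 0)).mp h2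
    obtain ⟨t, ht⟩ := h3
    rw [AddSubgroup.mem_zmultiples_iff]
    refine ⟨(t : ℤ), ?_⟩
    rw [zsmul_eq_mul, ← ZMod.natCast_rightInverse a, ht]
    push_cast
    ring
  have hzmem : ∀ a ∈ AddSubgroup.zmultiples ((p : ℕ) : ZMod (p ^ 2 * q)),
      ((p * q : ℕ) : ZMod (p ^ 2 * q)) * a = 0 := by
    intro a ha
    rw [AddSubgroup.mem_zmultiples_iff] at ha
    obtain ⟨k, hk'⟩ := ha
    have hz : ((p * q : ℕ) : ZMod (p ^ 2 * q)) * ((p : ℕ) : ZMod (p ^ 2 * q)) = 0 := by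
      rw [← Nat.cast_mul]
      have h4 : p * q * p = p ^ 2 * q := by ring
      rw [h4, ZMod.natCast_self]
    rw [← hk', zsmul_eq_mul]
    linear_combination ((k : ℤ) : ZMod (p ^ 2 * q)) * hz
  have hcardz : Nat.card (AddSubgroup.zmultiples ((p : ℕ) : ZMod (p ^ 2 * q))) = p * q := by
    rw [Nat.card_zmultiples, ZMod.addOrderOf_coe p (NeZero.ne (p ^ 2 * q))]
    have hgcd : (p ^ 2 * q).gcd p = p := Nat.gcd_eq_right ⟨p * q, by ring⟩
    rw [hgcd, show p ^ 2 * q = p * (p * q) by ring, Nat.mul_div_cancel_left _ hp.pos]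
  have hKeq : kerLambda g
      = (AddSubgroup.zmultiples ((p : ℕ) : ZMod (p ^ 2 * q)) : Set (ZMod (p ^ 2 * q))) := by
    apply Set.eq_of_subset_of_ncard_le
    · intro a ha
      exact hmemz a (hann a ha)
    · have h2 : (kerLambda g).ncard = p * q := by
        rw [← Nat.card_coe_set_eq]; exact hk
      have h3 : ((AddSubgroup.zmultiples ((p : ℕ) : ZMod (p ^ 2 * q))
          : Set (ZMod (p ^ 2 * q)))).ncard = p * q := by
        rw [← Nat.card_coe_set_eq]; exact hcardz
      rw [h2, h3]
    · exact Set.toFinite _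
  have hKiff2 : ∀ a, a ∈ kerLambda g ↔ ((p * q : ℕ) : ZMod (p ^ 2 * q)) * a = 0 := by
    intro a
    constructor
    · exact hann a
    · intro h; rw [hKeq]; exact hmemz a h
  have hKmem : ∀ x a, x ∈ kerLambda g → u (x + a) = u a := by
    intro x a hx
    have h1 : x + a = g x a := (hx a).symm
    rw [h1, hmul, (hKiff x).mp hx, one_mul]
  have hfib : ∀ a b, u a = u b → ((p * q : ℕ) : ZMod (p ^ 2 * q)) * (b - a) = 0 := by
    intro a b hab
    obtain ⟨a', ha1, ha2⟩ := hunit a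
    have h1 : u (g a' b) = 1 := by rw [hmul, ← hab, ha2]
    have h2 : ((p * q : ℕ) : ZMod (p ^ 2 * q)) * (g a' b) = 0 :=
      (hKiff2 _).mp ((hKiff _).mpr h1)
    rw [hlam] at h2
    rw [hlam] at ha1
    have h3 : ((p * q : ℕ) : ZMod (p ^ 2 * q)) * (u a' * (b - a)) = 0 := by
      linear_combination h2 - ((p * q : ℕ) : ZMod (p ^ 2 * q)) * ha1
    calc ((p * q : ℕ) : ZMod (p ^ 2 * q)) * (b - a)
        = u a * (((p * q : ℕ) : ZMod (p ^ 2 * q)) * (u a' * (b - a))) := by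
          linear_combination (-((p * q : ℕ) : ZMod (p ^ 2 * q)) * (b - a)) * ha2
      _ = 0 := by rw [h3, mul_zero]
  -- the unit-valued version of u
  have huuex : ∀ a, ∃ w : (ZMod (p ^ 2 * q))ˣ, (w : ZMod (p ^ 2 * q)) = u a := by
    intro a
    obtain ⟨a', _, ha2⟩ := hunit a
    exact ⟨⟨u a, u a', (by linear_combination ha2), ha2⟩, rfl⟩
  choose uu huu using huuex
  -- the image subgroup S
  set S : Subgroup (ZMod (p ^ 2 * q))ˣ :=
    { carrier := {w | ∃ a, uu a = w}
      one_mem' := ⟨0, Units.ext (by rw [huu, hu0, Units.val_one])⟩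
      mul_mem' := by
        rintro x y ⟨a, rfl⟩ ⟨b, rfl⟩
        exact ⟨g a b, Units.ext (by rw [huu, hmul, Units.val_mul, huu, huu])⟩
      inv_mem' := by
        rintro x ⟨a, rfl⟩
        obtain ⟨a', ha1, ha2⟩ := hunit a
        refine ⟨a', ?_⟩
        have : (uu a' : ZMod (p ^ 2 * q)) * (uu a : ZMod (p ^ 2 * q)) = 1 := by
          rw [huu, huu]; exact ha2
        exact Units.ext_iff.mpr (by
          have h5 : uu a' * uu a = 1 := Units.ext (by rw [Units.val_mul, this, Units.val_one])
          have := inv_eq_of_mul_eq_one_left h5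
          rw [this]) } with hS
  -- card of the quotient is p
  have hq_card : Nat.card (ZMod (p ^ 2 * q) ⧸ Ksub) = p := by
    have h1 := AddSubgroup.card_eq_card_quotient_mul_card_addSubgroup Ksub
    rw [Nat.card_zmod, hKsub_card] at h1
    have h2 : p * (p * q) = Nat.card (ZMod (p ^ 2 * q) ⧸ Ksub) * (p * q) := by
      rw [← h1]; ring
    exact (Nat.eq_of_mul_eq_mul_right (Nat.mul_pos hp.pos hq.pos) h2).symm
  -- the map from the quotient to S
  have hwd : ∀ a b : ZMod (p ^ 2 * q), (QuotientAddGroup.leftRel Ksub) a b →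
      (⟨uu a, ⟨a, rfl⟩⟩ : S) = (⟨uu b, ⟨b, rfl⟩⟩ : S) := by
    intro a b hab
    rw [QuotientAddGroup.leftRel_apply] at hab
    have h1 : u a = u b := by
      have h2 : u ((-a + b) + a) = u a := hKmem _ a hab
      rw [show (-a + b) + a = b by ring] at h2
      exact h2.symm
    exact Subtype.ext (Units.ext (by rw [huu, huu, h1]))
  set φ : ZMod (p ^ 2 * q) ⧸ Ksub → S :=
    Quotient.lift (fun a => (⟨uu a, ⟨a, rfl⟩⟩ : S)) hwd with hφ
  have hφmk : ∀ a : ZMod (p ^ 2 * q), φ (QuotientAddGroup.mk a) = ⟨uu a, ⟨a, rfl⟩⟩ := by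
    intro a; rfl
  have hφbij : Function.Bijective φ := by
    constructor
    · intro x y hxy
      induction x using QuotientAddGroup.induction_on with | H a =>
      induction y using QuotientAddGroup.induction_on with | H b =>
      rw [hφmk, hφmk] at hxy
      have h0 : uu a = uu b := Subtype.ext_iff.mp hxy
      have h1 : u a = u b := by
        have h2 := congrArg Units.val h0
        rw [huu, huu] at h2
        exact h2
      apply (QuotientAddGroup.eq).mpr
      have h3 := hfib a b h1
      rw [show b - a = -a + b by ring] at h3
      exact (hKiff2 _).mpr h3
    · rintro ⟨w, a, rfl⟩
      exact ⟨QuotientAddGroup.mk a, hφmk a⟩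
  have hScard : Nat.card S = p := by
    rw [← Nat.card_congr (Equiv.ofBijective φ hφbij)]
    exact hq_card
  -- u a ^ p = 1
  have hupow : ∀ a, u a ^ p = 1 := by
    intro a
    have h1 : (⟨uu a, ⟨a, rfl⟩⟩ : S) ^ Nat.card S = 1 := pow_card_eq_one'
    rw [hScard] at h1
    have h2 : (uu a) ^ p = 1 := by
      have := congrArg Subtype.val h1
      simpa using this
    have h3 := congrArg Units.val h2
    rw [Units.val_pow_eq_pow_val, huu, Units.val_one] at h3
    exact h3
  -- u a - 1 = pq * t
  have hsub : ∀ a, ∃ t : ℕ, u a - 1 = ((p * q * t : ℕ) : ZMod (p ^ 2 * q)) := by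
    intro a
    exact unit_pow_sub p q hp hq hpq hmod (u a) ⟨uu a, huu a⟩ (hupow a)
  have hzero2 : ∀ s t : ℕ, ((p * q * s : ℕ) : ZMod (p ^ 2 * q))
      * ((p * q * t : ℕ) : ZMod (p ^ 2 * q)) = 0 := by
    intro s t
    rw [← Nat.cast_mul, show p * q * s * (p * q * t) = (p ^ 2 * q) * (q * s * t) by ring,
      Nat.cast_mul, ZMod.natCast_self, zero_mul]
  have hzero1 : ∀ t : ℕ, ((p * q : ℕ) : ZMod (p ^ 2 * q))
      * ((p * q * t : ℕ) : ZMod (p ^ 2 * q)) = 0 := by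
    intro t
    rw [← Nat.cast_mul, show p * q * (p * q * t) = (p ^ 2 * q) * (q * t) by ring,
      Nat.cast_mul, ZMod.natCast_self, zero_mul]
  -- v := u - 1 is additive
  have hvadd : ∀ a b, u (a + b) - 1 = (u a - 1) + (u b - 1) := by
    intro a b
    obtain ⟨s, hs⟩ := hsub a
    obtain ⟨t, ht⟩ := hsub b
    have hx : ((p * q : ℕ) : ZMod (p ^ 2 * q)) * ((u a - 1) * b) = 0 := by
      rw [hs, ← mul_assoc, hzero1 s, zero_mul]
    have hxK : (u a - 1) * b ∈ kerLambda g := (hKiff2 _).mpr hx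
    have h1 : u (a + b) = u a * u b := by
      have h2 : u ((u a - 1) * b + (a + b)) = u (a + b) := hKmem _ _ hxK
      have h3 : (u a - 1) * b + (a + b) = g a b := by rw [hlam]; ring
      rw [h3, hmul] at h2
      exact h2.symm
    rw [h1]
    have h4 : (u a - 1) * (u b - 1) = 0 := by rw [hs, ht]; exact hzero2 s t
    linear_combination h4
  -- v a = (u 1 - 1) * a
  have hvlin : ∀ a, u a - 1 = (u 1 - 1) * a := by
    have hadd : ∀ x y, (u (x + y) - 1) = (u x - 1) + (u y - 1) := hvadd
    intro a
    exact zmod_hom_mul (AddMonoidHom.mk' (fun x => u x - 1) (by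
      intro x y
      have h0 : u 0 = 1 := hu0
      have := hvadd x y
      exact this)) a
  obtain ⟨c, hc⟩ := hsub 1
  refine ⟨c, ?_, ?_⟩
  · intro hdvd
    obtain ⟨c', hc'⟩ := hdvd
    have hd0 : u 1 - 1 = 0 := by
      rw [hc, hc', show p * q * (p * c') = (p ^ 2 * q) * c' by ring,
        Nat.cast_mul, ZMod.natCast_self, zero_mul]
    have hall : ∀ a, a ∈ kerLambda g := by
      intro a
      rw [hKiff]
      have := hvlin a
      rw [hd0, zero_mul, sub_eq_zero] at this
      exact this
    have huniv : kerLambda g = Set.univ := Set.eq_univ_of_forall hall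
    have hcard2 : Nat.card ↥(kerLambda g) = p ^ 2 * q := by
      rw [huniv, Nat.card_congr (Equiv.Set.univ _)]
      exact Nat.card_zmod _
    have heq : p * q = p ^ 2 * q := by rw [← hk]; exact hcard2
    have h5 : p = p ^ 2 := Nat.eq_of_mul_eq_mul_right hq.pos heq
    have h6 : p * 1 = p * p := by rw [mul_one]; rw [pow_two] at h5; exact h5
    have h7 : 1 = p := Nat.eq_of_mul_eq_mul_left hp.pos h6
    exact hp.one_lt.ne' h7.symm
  · intro a b
    have h1 : g a b = a + u a * b := hlam a b
    have h2 : u a - 1 = (u 1 - 1) * a := hvlin a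
    rw [hc] at h2
    calc g a b = a + u a * b := hlam a b
      _ = a + b + ((u a - 1)) * b := by ring
      _ = a + b + ((p * q * c : ℕ) : ZMod (p ^ 2 * q)) * a * b := by rw [h2]

lemma normal_form (p q : ℕ) (hp : p.Prime) (hq : q.Prime) (hpq : p ≠ q)
    (hmod : ¬ q ≡ 1 [MOD p])
    (B : Type*) [AddCommGroup B] (hcyc : IsAddCyclic B)
    (hcard : Nat.card B = p ^ 2 * q)
    (f : B → B → B) (hb : IsLeftBrace f)
    (hk : Nat.card ↥(kerLambda f) = p * q) :
    ∃ (e : B ≃+ ZMod (p ^ 2 * q)) (c : ℕ), ¬ p ∣ c ∧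
      ∀ a b, e (f a b) = e a + e b + ((p * q * c : ℕ) : ZMod (p ^ 2 * q)) * e a * e b := by
  have e0 : ZMod (p ^ 2 * q) ≃+ B := hcard ▸ zmodAddCyclicAddEquiv hcyc
  set e : B ≃+ ZMod (p ^ 2 * q) := e0.symm with he
  set g : ZMod (p ^ 2 * q) → ZMod (p ^ 2 * q) → ZMod (p ^ 2 * q) :=
    fun x y => e (f (e.symm x) (e.symm y)) with hg
  have hsymm : ∀ x : B, e.symm (e x) = x := fun x => e.symm_apply_apply x
  have happ : ∀ x : ZMod (p ^ 2 * q), e (e.symm x) = x := fun x => e.apply_symm_apply x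
  have hgf : ∀ a b : B, e (f a b) = g (e a) (e b) := by
    intro a b; rw [hg]; simp only [hsymm]
  obtain ⟨hassoc, hidl, hidr, hinv, hdist⟩ := hb
  have hbg : IsLeftBrace g := by
    refine ⟨?_, ?_, ?_, ?_, ?_⟩
    · intro a b c
      simp only [hg, hsymm]
      rw [hassoc]
    · intro a
      simp only [hg]
      rw [show e.symm 0 = 0 from map_zero e.symm, hidl, happ]
    · intro a
      simp only [hg]
      rw [show e.symm 0 = 0 from map_zero e.symm, hidr, happ]
    · intro a
      obtain ⟨a', ha'⟩ := hinv (e.symm a)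
      refine ⟨e a', ?_⟩
      simp only [hg, hsymm]
      rw [ha', map_zero]
    · intro a b c
      simp only [hg]
      rw [show e.symm (b + c) = e.symm b + e.symm c from map_add e.symm b c, hdist,
        map_add, map_sub, happ]
  have hker : ∀ x, x ∈ kerLambda g ↔ e.symm x ∈ kerLambda f := by
    intro x
    constructor
    · intro h b'
      have h1 := h (e b')
      simp only [hg, hsymm] at h1
      have h2 := congrArg e.symm h1
      rw [hsymm, map_add, hsymm] at h2
      exact h2
    · intro h b
      simp only [hg]
      rw [h (e.symm b), map_add, happ, happ]
  have hkg : Nat.card ↥(kerLambda g) = p * q := by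
    rw [← hk]
    exact Nat.card_congr (Equiv.subtypeEquiv e.symm.toEquiv (fun x => hker x))
  obtain ⟨c, hc1, hc2⟩ := classify p q hp hq hpq hmod g hbg hkg
  exact ⟨e, c, hc1, fun a b => by rw [hgf, hc2]⟩

/-- Let `p, q` be distinct primes with `q ≢ 1 (mod p)`.  Any two left braces whose
additive group is cyclic of order `p²q` and whose kernel of `λ` has order `pq` are
isomorphic as braces. -/
theorem stmt_6 (p q : ℕ) (hp : p.Prime) (hq : q.Prime) (hpq : p ≠ q)
    (hmod : ¬ q ≡ 1 [MOD p])
    (B₁ : Type*) [AddCommGroup B₁] (B₂ : Type*) [AddCommGroup B₂]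
    (hcyc₁ : IsAddCyclic B₁) (hcyc₂ : IsAddCyclic B₂)
    (hcard₁ : Nat.card B₁ = p ^ 2 * q) (hcard₂ : Nat.card B₂ = p ^ 2 * q)
    (f₁ : B₁ → B₁ → B₁) (f₂ : B₂ → B₂ → B₂)
    (hb₁ : IsLeftBrace f₁) (hb₂ : IsLeftBrace f₂)
    (hk₁ : Nat.card ↥(kerLambda f₁) = p * q) (hk₂ : Nat.card ↥(kerLambda f₂) = p * q) :
    ∃ e : B₁ ≃ B₂, (∀ a b, e (a + b) = e a + e b) ∧
      ∀ a b, e (f₁ a b) = f₂ (e a) (e b) := by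

  haveI : Fact p.Prime := ⟨hp⟩
  haveI : Fact q.Prime := ⟨hq⟩
  haveI : NeZero (p ^ 2 * q) := ⟨Nat.mul_ne_zero (pow_ne_zero 2 hp.pos.ne') hq.pos.ne'⟩
  obtain ⟨e₁, c₁, hc₁, H₁⟩ := normal_form p q hp hq hpq hmod B₁ hcyc₁ hcard₁ f₁ hb₁ hk₁
  obtain ⟨e₂, c₂, hc₂, H₂⟩ := normal_form p q hp hq hpq hmod B₂ hcyc₂ hcard₂ f₂ hb₂ hk₂
  -- find the multiplier m
  have hc2p : ((c₂ : ZMod p)) ≠ 0 := by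
    rw [Ne, ZMod.natCast_eq_zero_iff]; exact hc₂
  have hc1p : ((c₁ : ZMod p)) ≠ 0 := by
    rw [Ne, ZMod.natCast_eq_zero_iff]; exact hc₁
  set ρ : ZMod p := (c₁ : ZMod p) * (c₂ : ZMod p)⁻¹ with hρ
  have hρ0 : ρ ≠ 0 := by
    apply mul_ne_zero hc1p
    exact inv_ne_zero hc2p
  have hρeq : (c₂ : ZMod p) * ρ = (c₁ : ZMod p) := by
    rw [hρ]
    field_simp
  set m : ℕ := (Nat.chineseRemainder ((Nat.coprime_primes hp hq).mpr hpq) ρ.val 1).val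
    with hmdef
  obtain ⟨hm1, hm2⟩ := (Nat.chineseRemainder ((Nat.coprime_primes hp hq).mpr hpq) ρ.val 1).prop
  -- m is a unit mod p^2*q
  have hmp : ¬ p ∣ m := by
    intro hdvd
    have h1 : (m : ZMod p) = 0 := (ZMod.natCast_eq_zero_iff _ _).mpr hdvd
    have h2 : (m : ZMod p) = (ρ.val : ZMod p) := (ZMod.natCast_eq_natCast_iff _ _ _).mpr hm1
    rw [ZMod.natCast_val, ZMod.cast_id] at h2
    exact hρ0 (by rw [← h2, h1])
  have hmq : ¬ q ∣ m := by
    intro hdvd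
    have h1 : (m : ZMod q) = 0 := (ZMod.natCast_eq_zero_iff _ _).mpr hdvd
    have h2 : (m : ZMod q) = (1 : ℕ) := (ZMod.natCast_eq_natCast_iff _ _ _).mpr hm2
    rw [Nat.cast_one] at h2
    rw [h2] at h1
    exact one_ne_zero h1
  have hcop : Nat.Coprime m (p ^ 2 * q) := by
    apply Nat.Coprime.mul_right
    · exact Nat.Coprime.pow_right 2 (Nat.coprime_comm.mp (hp.coprime_iff_not_dvd.mpr hmp))
    · exact Nat.coprime_comm.mp (hq.coprime_iff_not_dvd.mpr hmq)
  set w : (ZMod (p ^ 2 * q))ˣ := ZMod.unitOfCoprime m hcop with hw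
  have hkey : ((p * q * c₁ : ℕ) : ZMod (p ^ 2 * q)) * m
      = ((p * q * c₂ : ℕ) : ZMod (p ^ 2 * q)) * m * m := by
    have h1 : ((c₂ * m : ℕ) : ZMod p) = ((c₁ : ℕ) : ZMod p) := by
      push_cast
      have h2 : (m : ZMod p) = (ρ.val : ZMod p) :=
        (ZMod.natCast_eq_natCast_iff _ _ _).mpr hm1
      rw [h2, ZMod.natCast_val, ZMod.cast_id]
      exact hρeq
    have h3 : (p : ℤ) ∣ (c₂ * m : ℕ) - (c₁ : ℕ) := by
      rw [← ZMod.intCast_zmod_eq_zero_iff_dvd]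
      push_cast
      rw [sub_eq_zero]
      exact_mod_cast h1
    obtain ⟨k, hk'⟩ := h3
    have h6 : ((c₂ : ZMod (p ^ 2 * q)) * m - c₁) = p * k := by
      have h7 := congrArg (fun z : ℤ => (z : ZMod (p ^ 2 * q))) hk'
      push_cast at h7
      exact h7
    have h8 : ((p : ZMod (p ^ 2 * q))) * p * q = 0 := by
      have h9 := ZMod.natCast_self (p ^ 2 * q)
      push_cast at h9
      linear_combination h9
    push_cast
    linear_combination (-((p : ZMod (p ^ 2 * q)) * q * m)) * h6 - (m : ZMod (p ^ 2 * q)) * k * h8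
  set W : ZMod (p ^ 2 * q) ≃ ZMod (p ^ 2 * q) :=
    { toFun := fun x => (w : ZMod (p ^ 2 * q)) * x
      invFun := fun x => ((w⁻¹ : (ZMod (p ^ 2 * q))ˣ) : ZMod (p ^ 2 * q)) * x
      left_inv := fun x => Units.inv_mul_cancel_left w x
      right_inv := fun x => Units.mul_inv_cancel_left w x }
    with hW
  set eE : B₁ ≃ B₂ := (e₁.toEquiv.trans W).trans e₂.symm.toEquiv with heE
  have hEapp : ∀ x : B₁, e₂ (eE x) = (m : ZMod (p ^ 2 * q)) * e₁ x := by
    intro x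
    show e₂ (e₂.symm (W (e₁ x))) = _
    rw [AddEquiv.apply_symm_apply]
    rfl
  refine ⟨eE, ?_, ?_⟩
  · intro a b
    apply e₂.injective
    rw [map_add e₂, hEapp, hEapp, hEapp, map_add e₁]
    ring
  · intro a b
    apply e₂.injective
    rw [H₂, hEapp, hEapp, hEapp, H₁]
    linear_combination (e₁ a * e₁ b) * hkey
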